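/- arXiv:1504.06455 — 4 statements merged into one kernel-verified Lean document; each statement's English description precedes it below -/
import Mathlib

section
/- For every ρ > 0, ρ · ∫_0^∞ (log t)/((1+t)(1+t+ρ)) dt = (1/2)·(log(1+ρ))^2. -/
open MeasureTheory Real Set Filter Topology

lemma dom_integrable :
    IntegrableOn (fun t : ℝ => (|Real.log t| + 1) / (1 + t) ^ 2) (Ioi 0) := by
  have hmeas : Measurable (fun t : ℝ => (|Real.log t| + 1) / (1 + t) ^ 2) :=
    (Real.measurable_log.abs.add measurable_const).div
      ((measurable_const.add measurable_id).pow_const 2)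
  have hsplit : Ioi (0:ℝ) = Ioc 0 1 ∪ Ioi 1 := (Ioc_union_Ioi_eq_Ioi zero_le_one).symm
  rw [hsplit, integrableOn_union]
  constructor
  · have hφ : IntegrableOn (fun t : ℝ => 2 * t ^ (-(1/2) : ℝ) + 1) (Ioc 0 1) := by
      refine Integrable.add ?_ (integrableOn_const measure_Ioc_lt_top.ne)
      have h := intervalIntegral.intervalIntegrable_rpow' (a := (0:ℝ)) (b := 1)
        (r := (-(1/2) : ℝ)) (by norm_num)
      exact ((intervalIntegrable_iff_integrableOn_Ioc_of_le zero_le_one).mp h).const_mul 2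
    refine MeasureTheory.Integrable.mono hφ hmeas.aestronglyMeasurable ?_
    refine (ae_restrict_iff' measurableSet_Ioc).mpr (ae_of_all _ fun t ht => ?_)
    obtain ⟨ht0, ht1⟩ := ht
    have hrp : (0:ℝ) < t ^ (-(1/2) : ℝ) := Real.rpow_pos_of_pos ht0 _
    have h1 : |Real.log t| ≤ 2 * t ^ (-(1/2) : ℝ) := by
      have hl : |Real.log t| = -Real.log t := abs_of_nonpos (Real.log_nonpos ht0.le ht1)
      have hr : Real.log (t ^ (-(1/2):ℝ)) = -(1/2) * Real.log t := Real.log_rpow ht0 _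
      have hle : Real.log (t ^ (-(1/2):ℝ)) ≤ t ^ (-(1/2):ℝ) - 1 :=
        Real.log_le_sub_one_of_pos hrp
      nlinarith
    have hd : (1:ℝ) ≤ (1+t)^2 := by nlinarith
    rw [Real.norm_eq_abs, Real.norm_eq_abs,
      abs_of_nonneg (show (0:ℝ) ≤ (|Real.log t| + 1) / (1+t)^2 by positivity),
      abs_of_nonneg (show (0:ℝ) ≤ 2 * t ^ (-(1/2):ℝ) + 1 by positivity)]
    calc (|Real.log t| + 1) / (1+t)^2 ≤ |Real.log t| + 1 := div_le_self (by positivity) hd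
      _ ≤ 2 * t ^ (-(1/2):ℝ) + 1 := by linarith
  · have hφ : IntegrableOn (fun t : ℝ => 3 * t ^ (-(3/2) : ℝ)) (Ioi 1) :=
      (integrableOn_Ioi_rpow_of_lt (by norm_num) one_pos).const_mul 3
    refine MeasureTheory.Integrable.mono hφ hmeas.aestronglyMeasurable ?_
    refine (ae_restrict_iff' measurableSet_Ioi).mpr (ae_of_all _ fun t ht => ?_)
    have ht1 : (1:ℝ) < t := ht
    have ht0 : (0:ℝ) < t := lt_trans one_pos ht1
    have hhalf : (1:ℝ) ≤ t ^ ((1/2):ℝ) := Real.one_le_rpow ht1.le (by norm_num)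
    have hlog : Real.log t ≤ 2 * t ^ ((1/2):ℝ) - 2 := by
      have hr : Real.log (t ^ ((1/2):ℝ)) = (1/2) * Real.log t := Real.log_rpow ht0 _
      have hle : Real.log (t ^ ((1/2):ℝ)) ≤ t ^ ((1/2):ℝ) - 1 :=
        Real.log_le_sub_one_of_pos (Real.rpow_pos_of_pos ht0 _)
      linarith
    have habs : |Real.log t| = Real.log t := abs_of_nonneg (Real.log_nonneg ht1.le)
    have hnum : |Real.log t| + 1 ≤ 3 * t ^ ((1/2):ℝ) := by rw [habs]; linarith
    have hden : t ^ (2:ℕ) ≤ (1+t)^2 := by nlinarith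
    have hkey : (|Real.log t| + 1) / (1+t)^2 ≤ 3 * t ^ ((1/2):ℝ) / t ^ (2:ℕ) :=
      div_le_div₀ (by positivity) hnum (by positivity) hden
    have heq : 3 * t ^ ((1/2):ℝ) / t ^ (2:ℕ) = 3 * t ^ (-(3/2):ℝ) := by
      rw [← Real.rpow_natCast t 2, mul_div_assoc, ← Real.rpow_sub ht0]
      norm_num
    rw [Real.norm_eq_abs, Real.norm_eq_abs,
      abs_of_nonneg (show (0:ℝ) ≤ (|Real.log t| + 1) / (1+t)^2 by positivity),
      abs_of_nonneg (show (0:ℝ) ≤ 3 * t ^ (-(3/2):ℝ) by positivity)]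
    calc (|Real.log t| + 1) / (1+t)^2 ≤ 3 * t ^ ((1/2):ℝ) / t ^ (2:ℕ) := hkey
      _ = 3 * t ^ (-(3/2):ℝ) := heq

lemma f1_integrable (c : ℝ) (hc : 1 ≤ c) :
    IntegrableOn (fun t : ℝ => Real.log t / ((1 + t) * (t + c))) (Ioi 0) := by
  have hm : Measurable (fun t : ℝ => Real.log t / ((1 + t) * (t + c))) :=
    Real.measurable_log.div ((measurable_const.add measurable_id).mul
      (measurable_id.add measurable_const))
  refine MeasureTheory.Integrable.mono dom_integrable hm.aestronglyMeasurable ?_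
  refine (ae_restrict_iff' measurableSet_Ioi).mpr (ae_of_all _ fun t ht => ?_)
  have ht0 : (0:ℝ) < t := ht
  have h1 : (0:ℝ) < 1 + t := by linarith
  have h2 : (0:ℝ) < t + c := by linarith
  have hden : (1+t)^2 ≤ (1+t)*(t+c) := by nlinarith
  rw [Real.norm_eq_abs, Real.norm_eq_abs,
    abs_of_nonneg (show (0:ℝ) ≤ (|Real.log t| + 1) / (1+t)^2 by positivity),
    abs_div, abs_of_pos (mul_pos h1 h2)]
  calc |Real.log t| / ((1+t)*(t+c)) ≤ (|Real.log t| + 1) / (1+t)^2 :=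
        div_le_div₀ (by positivity) (by linarith) (pow_pos h1 2) hden
    _ = _ := rfl

lemma g_integrable (c : ℝ) (hc : 1 ≤ c) :
    IntegrableOn (fun t : ℝ => ((1 + t) * (t + c))⁻¹) (Ioi 0) := by
  have hm : Measurable (fun t : ℝ => ((1 + t) * (t + c))⁻¹) :=
    ((measurable_const.add measurable_id).mul (measurable_id.add measurable_const)).inv
  refine MeasureTheory.Integrable.mono dom_integrable hm.aestronglyMeasurable ?_
  refine (ae_restrict_iff' measurableSet_Ioi).mpr (ae_of_all _ fun t ht => ?_)
  have ht0 : (0:ℝ) < t := ht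
  have h1 : (0:ℝ) < 1 + t := by linarith
  have h2 : (0:ℝ) < t + c := by linarith
  have hden : (1+t)^2 ≤ (1+t)*(t+c) := by nlinarith
  rw [Real.norm_eq_abs, Real.norm_eq_abs,
    abs_of_nonneg (show (0:ℝ) ≤ (|Real.log t| + 1) / (1+t)^2 by positivity),
    abs_of_pos (inv_pos.mpr (mul_pos h1 h2))]
  rw [inv_eq_one_div]
  exact div_le_div₀ (by positivity) (le_add_of_nonneg_left (abs_nonneg _)) (pow_pos h1 2) hden

lemma g_integral (c : ℝ) (hc : 1 < c) :
    ∫ t in Ioi (0:ℝ), ((1 + t) * (t + c))⁻¹ = Real.log c / (c - 1) := by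
  have hc0 : (0:ℝ) < c := lt_trans one_pos hc
  set F : ℝ → ℝ := fun u => (Real.log (1 + u) - Real.log (u + c)) / (c - 1) with hF
  have hderiv : ∀ x ∈ Ici (0:ℝ), HasDerivAt F (((1 + x) * (x + c))⁻¹) x := by
    intro x hx
    have hx0 : (0:ℝ) ≤ x := hx
    have h1 : (0:ℝ) < 1 + x := by linarith
    have h2 : (0:ℝ) < x + c := by linarith
    have d1 : HasDerivAt (fun u : ℝ => Real.log (1 + u)) (1 / (1 + x)) x := by
      simpa using ((hasDerivAt_id x).const_add 1).log h1.ne'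
    have d2 : HasDerivAt (fun u : ℝ => Real.log (u + c)) (1 / (x + c)) x := by
      simpa using ((hasDerivAt_id x).add_const c).log h2.ne'
    have h := (d1.sub d2).div_const (c - 1)
    refine h.congr_deriv ?_
    rw [eq_comm, eq_div_iff (by linarith : c - 1 ≠ 0)]
    field_simp
    ring
  have htop : Tendsto F atTop (𝓝 0) := by
    have hr0 : Tendsto (fun u : ℝ => (c-1)/(u+c)) atTop (𝓝 0) :=
      Tendsto.div_atTop tendsto_const_nhds (tendsto_atTop_add_const_right atTop c tendsto_id)
    have hratio : Tendsto (fun u : ℝ => (1+u)/(u+c)) atTop (𝓝 1) := by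
      have heq : (fun u:ℝ => 1 - (c-1)/(u+c)) =ᶠ[atTop] fun u => (1+u)/(u+c) := by
        filter_upwards [eventually_gt_atTop 0] with u hu
        have huc : u + c ≠ 0 := ne_of_gt (by linarith)
        field_simp
        ring
      have := (tendsto_const_nhds (x := (1:ℝ)) (f := atTop)).sub hr0
      simpa using this.congr' heq
    have hlog : Tendsto (fun u : ℝ => Real.log ((1+u)/(u+c))) atTop (𝓝 0) := by
      have hcont := (Real.continuousAt_log one_ne_zero).tendsto
      have := hcont.comp hratio
      simpa [Function.comp_def] using this
    have heq2 : (fun u : ℝ => Real.log ((1+u)/(u+c)) / (c-1)) =ᶠ[atTop] F := by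
      filter_upwards [eventually_gt_atTop 0] with u hu
      rw [hF]
      have h1 : (1+u) ≠ 0 := ne_of_gt (by linarith)
      have h2 : (u+c) ≠ 0 := ne_of_gt (by linarith)
      rw [Real.log_div h1 h2]
    simpa using (hlog.div_const (c-1)).congr' heq2
  have hint : IntegrableOn (fun t : ℝ => ((1 + t) * (t + c))⁻¹) (Ioi 0) :=
    g_integrable c hc.le
  have h := integral_Ioi_of_hasDerivAt_of_tendsto' hderiv hint htop
  rw [h, hF]
  norm_num
  ring


theorem integral_log_div_prod (ρ : ℝ) (hρ : 0 < ρ) :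
    ρ * ∫ t in Set.Ioi (0 : ℝ), Real.log t / ((1 + t) * (1 + t + ρ)) =
      (Real.log (1 + ρ)) ^ 2 / 2 := by
  set c : ℝ := 1 + ρ with hcdef
  have hc : 1 < c := by rw [hcdef]; linarith
  have hc0 : (0:ℝ) < c := lt_trans one_pos hc
  set f₁ : ℝ → ℝ := fun t => Real.log t / ((1 + t) * (t + c)) with hf₁
  have hre : (fun t : ℝ => Real.log t / ((1 + t) * (1 + t + ρ))) = f₁ := by
    funext t; rw [hf₁, hcdef]; ring_nf
  rw [hre]
  set I : ℝ := ∫ t in Ioi (0:ℝ), f₁ t with hI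
  -- substitution x ↦ x⁻¹
  have hstep1 : (∫ x in Ioi (0:ℝ), (|(-1:ℝ)| * x ^ ((-1:ℝ) - 1)) • f₁ (x ^ (-1:ℝ))) = I :=
    MeasureTheory.integral_comp_rpow_Ioi f₁ (by norm_num)
  set H : ℝ → ℝ := fun x => f₁ x⁻¹ / x ^ 2 with hH
  have hstep2 : (∫ x in Ioi (0:ℝ), (|(-1:ℝ)| * x ^ ((-1:ℝ) - 1)) • f₁ (x ^ (-1:ℝ)))
      = ∫ x in Ioi (0:ℝ), H x := by
    refine setIntegral_congr_fun measurableSet_Ioi fun x hx => ?_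
    have hx0 : (0:ℝ) < x := hx
    have e1 : x ^ ((-1:ℝ) - 1) = (x ^ 2)⁻¹ := by
      have h : x ^ ((-1:ℝ) - 1) = (x ^ (((2:ℕ)):ℝ))⁻¹ := by
        rw [← Real.rpow_neg hx0.le]; norm_num
      rw [h, Real.rpow_natCast]
    have e2 : x ^ (-1:ℝ) = x⁻¹ := by
      have h : x ^ (-1:ℝ) = (x ^ (((1:ℕ)):ℝ))⁻¹ := by
        rw [← Real.rpow_neg hx0.le]; norm_num
      rw [h, Real.rpow_natCast, pow_one]
    rw [hH, e1, e2, smul_eq_mul]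
    simp only [abs_neg, abs_one]
    ring
  -- scaling x ↦ c⁻¹ * x
  have hscale := MeasureTheory.integral_comp_mul_left_Ioi H 0 (inv_pos.mpr hc0)
  simp only [mul_zero, inv_inv, smul_eq_mul] at hscale
  -- hscale : ∫ x in Ioi 0, H (c⁻¹ * x) = c * ∫ x in Ioi 0, H x
  set r : ℝ → ℝ := fun u => (Real.log c - Real.log u) * ((1 + u) * (u + c))⁻¹ with hr
  have hpoint : ∫ x in Ioi (0:ℝ), H (c⁻¹ * x) = ∫ x in Ioi (0:ℝ), c * r x := by
    refine setIntegral_congr_fun measurableSet_Ioi fun u hu => ?_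
    have hu0 : (0:ℝ) < u := hu
    have h1 : (0:ℝ) < 1 + u := by linarith
    have h2 : (0:ℝ) < u + c := by linarith
    have hinv : (c⁻¹ * u)⁻¹ = c * u⁻¹ := by
      rw [mul_inv, inv_inv]
    simp only [hH, hf₁, hr]
    rw [hinv]
    have hlog : Real.log (c * u⁻¹) = Real.log c - Real.log u := by
      rw [Real.log_mul hc0.ne' (inv_ne_zero hu0.ne'), Real.log_inv]; ring
    rw [hlog]
    have hcu1 : (0:ℝ) < 1 + c * u⁻¹ := by positivity
    have hcu2 : (0:ℝ) < c * u⁻¹ + c := by positivity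
    field_simp
  have hsub : I = ∫ x in Ioi (0:ℝ), r x := by
    have h1 : I = ∫ x in Ioi (0:ℝ), H x := by rw [← hstep1, hstep2]
    have h2 : (∫ x in Ioi (0:ℝ), c * r x) = c * ∫ x in Ioi (0:ℝ), r x :=
      integral_const_mul c r
    rw [h1]
    have : c * (∫ x in Ioi (0:ℝ), H x) = c * ∫ x in Ioi (0:ℝ), r x := by
      rw [← hscale, hpoint, h2]
    exact mul_left_cancel₀ hc0.ne' this
  -- split r
  have hgint := g_integrable c hc.le
  have hfint := f1_integrable c hc.le
  have hsplit : (∫ x in Ioi (0:ℝ), r x)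
      = Real.log c * (∫ x in Ioi (0:ℝ), ((1 + x) * (x + c))⁻¹) - I := by
    have hre2 : (fun x : ℝ => r x)
        = fun x => Real.log c * ((1 + x) * (x + c))⁻¹ - f₁ x := by
      funext x; rw [hr, hf₁]; ring
    rw [hre2, integral_sub ((hgint.const_mul _)) hfint, integral_const_mul, hI]
  have hgval := g_integral c hc
  have hIeq : I = Real.log c * (Real.log c / (c - 1)) - I := by
    calc I = ∫ x in Ioi (0:ℝ), r x := hsub
      _ = Real.log c * (∫ x in Ioi (0:ℝ), ((1 + x) * (x + c))⁻¹) - I := hsplit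
      _ = Real.log c * (Real.log c / (c - 1)) - I := by rw [hgval]
  have hρc : c - 1 = ρ := by rw [hcdef]; ring
  rw [hρc] at hIeq
  have h2I : ρ * (I + I) = Real.log c ^ 2 := by
    have : I + I = Real.log c * (Real.log c / ρ) := by linarith
    rw [this]
    field_simp
  nlinarith [h2I]
end

section
/- For the MNS shape ψ(t) = 1/(1+e^t), and every real u ≠ 0, ∫_{-∞}^{∞} ψ(t)·(1 - ψ(t+u)) dt = u/(1 - e^{-u}). -/
open MeasureTheory Real Filter

/-- The MNS (Fermi) shape function `ψ(t) = 1/(1+e^t)`. -/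
noncomputable def mnsShape (t : ℝ) : ℝ := (1 + Real.exp t)⁻¹

lemma one_add_exp_pos' (t : ℝ) : (0:ℝ) < 1 + Real.exp t := by positivity

lemma mnsShape_pos (t : ℝ) : 0 < mnsShape t := by unfold mnsShape; positivity

lemma mnsShape_le_one (t : ℝ) : mnsShape t ≤ 1 := by
  unfold mnsShape
  rw [inv_le_one_iff₀]
  right; linarith [Real.exp_pos t]

lemma mnsShape_le_exp_neg (t : ℝ) : mnsShape t ≤ Real.exp (-t) := by
  unfold mnsShape
  rw [Real.exp_neg]
  exact inv_anti₀ (Real.exp_pos t) (by linarith [Real.exp_pos t])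

lemma one_sub_mnsShape_le_exp (t : ℝ) : 1 - mnsShape t ≤ Real.exp t := by
  unfold mnsShape
  have h : 1 - (1 + Real.exp t)⁻¹ = Real.exp t / (1 + Real.exp t) := by
    field_simp
    ring
  rw [h]
  exact div_le_self (Real.exp_pos t).le (by linarith [Real.exp_pos t])

lemma one_sub_mnsShape_nonneg (t : ℝ) : 0 ≤ 1 - mnsShape t := by
  linarith [mnsShape_le_one t]

lemma mnsShape_continuous : Continuous mnsShape :=
  (continuous_const.add Real.continuous_exp).inv₀ fun t => (one_add_exp_pos' t).ne'

lemma log_one_add_exp (s : ℝ) :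
    Real.log (1 + Real.exp s) = s + Real.log (1 + Real.exp (-s)) := by
  have h : (1 + Real.exp s) = Real.exp s * (1 + Real.exp (-s)) := by
    rw [mul_add, mul_one, ← Real.exp_add]
    simp [add_comm]
  rw [h, Real.log_mul (Real.exp_pos s).ne' (one_add_exp_pos' (-s)).ne', Real.log_exp]

lemma tendsto_log_one_add_exp_neg :
    Tendsto (fun t : ℝ => Real.log (1 + Real.exp (-t))) atTop (nhds 0) := by
  have h1 : Tendsto (fun t : ℝ => Real.exp (-t)) atTop (nhds 0) :=
    Real.tendsto_exp_atBot.comp tendsto_neg_atTop_atBot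
  have h2 : Tendsto (fun t : ℝ => 1 + Real.exp (-t)) atTop (nhds 1) := by
    simpa using h1.const_add 1
  have h3 := ((Real.continuousAt_log one_ne_zero).tendsto).comp h2
  simpa [Function.comp_def] using h3

theorem mns_variance_integral (u : ℝ) (hu : u ≠ 0) :
    ∫ t : ℝ, mnsShape t * (1 - mnsShape (t + u)) = u / (1 - Real.exp (-u)) := by
  have hne : Real.exp u - 1 ≠ 0 := by
    intro h
    have h2 : Real.exp u = Real.exp 0 := by rw [Real.exp_zero]; linarith
    exact hu (Real.exp_injective h2)
  set c : ℝ := Real.exp u / (Real.exp u - 1) with hc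
  set F : ℝ → ℝ := fun t => c * (Real.log (1 + Real.exp (t + u)) - Real.log (1 + Real.exp t))
    with hF
  have hpos : ∀ t : ℝ, (0:ℝ) < 1 + Real.exp t := one_add_exp_pos'
  have hderiv : ∀ t : ℝ, HasDerivAt F
      (mnsShape t * (1 - mnsShape (t + u))) t := by
    intro t
    have h1 : HasDerivAt (fun t : ℝ => Real.log (1 + Real.exp t))
        (Real.exp t / (1 + Real.exp t)) t :=
      ((Real.hasDerivAt_exp t).const_add 1).log (hpos t).ne'
    have h2 : HasDerivAt (fun t : ℝ => Real.log (1 + Real.exp (t + u)))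
        (Real.exp (t + u) / (1 + Real.exp (t + u))) t := by
      have := (((Real.hasDerivAt_exp (t + u)).const_add 1).log (hpos (t+u)).ne').comp t
        ((hasDerivAt_id t).add_const u)
      simpa [Function.comp_def] using this
    have := ((h2.sub h1).const_mul c)
    refine this.congr_deriv ?_
    rw [hc]
    unfold mnsShape
    rw [Real.exp_add]
    field_simp
    ring
  have hcont : Continuous fun t : ℝ => mnsShape t * (1 - mnsShape (t + u)) :=
    mnsShape_continuous.mul
      (continuous_const.sub (mnsShape_continuous.comp (continuous_id.add continuous_const)))
  have hnn : ∀ t : ℝ, 0 ≤ mnsShape t * (1 - mnsShape (t + u)) := fun t =>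
    mul_nonneg (mnsShape_pos t).le (one_sub_mnsShape_nonneg (t + u))
  have hint : Integrable (fun t => mnsShape t * (1 - mnsShape (t + u))) := by
    rw [← MeasureTheory.integrableOn_univ, ← Set.Iic_union_Ioi (a := (0:ℝ))]
    apply MeasureTheory.IntegrableOn.union
    · apply MeasureTheory.Integrable.mono' (g := fun t => Real.exp u * Real.exp t)
      · exact (integrableOn_exp_Iic 0).const_mul _
      · exact hcont.aestronglyMeasurable.restrict
      · filter_upwards with t
        rw [Real.norm_eq_abs, abs_of_nonneg (hnn t)]
        calc mnsShape t * (1 - mnsShape (t + u))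
            ≤ 1 * (1 - mnsShape (t + u)) :=
              mul_le_mul_of_nonneg_right (mnsShape_le_one t) (one_sub_mnsShape_nonneg _)
          _ = 1 - mnsShape (t + u) := one_mul _
          _ ≤ Real.exp (t + u) := one_sub_mnsShape_le_exp _
          _ = Real.exp u * Real.exp t := by rw [← Real.exp_add]; ring_nf
    · apply MeasureTheory.Integrable.mono' (g := fun t => Real.exp (-1 * t))
      · exact exp_neg_integrableOn_Ioi 0 one_pos
      · exact hcont.aestronglyMeasurable.restrict
      · filter_upwards with t
        rw [Real.norm_eq_abs, abs_of_nonneg (hnn t)]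
        calc mnsShape t * (1 - mnsShape (t + u))
            ≤ mnsShape t * 1 :=
              mul_le_mul_of_nonneg_left (by linarith [mnsShape_pos (t+u)]) (mnsShape_pos t).le
          _ = mnsShape t := mul_one _
          _ ≤ Real.exp (-t) := mnsShape_le_exp_neg t
          _ = Real.exp (-1 * t) := by ring_nf
  have hbot : Tendsto F atBot (nhds 0) := by
    have h1 : Tendsto (fun t : ℝ => Real.exp t) atBot (nhds 0) := Real.tendsto_exp_atBot
    have hlog : Tendsto (fun t : ℝ => Real.log (1 + Real.exp t)) atBot (nhds 0) := by
      have h2 : Tendsto (fun t : ℝ => 1 + Real.exp t) atBot (nhds 1) := by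
        simpa using h1.const_add 1
      have h3 := ((Real.continuousAt_log one_ne_zero).tendsto).comp h2
      simpa [Function.comp_def] using h3
    have hlog2 : Tendsto (fun t : ℝ => Real.log (1 + Real.exp (t + u))) atBot (nhds 0) :=
      hlog.comp (tendsto_atBot_add_const_right _ u tendsto_id)
    have := (hlog2.sub hlog).const_mul c
    simpa using this
  have htop : Tendsto F atTop (nhds (c * u)) := by
    have hrw : F = fun t =>
        c * (u + (Real.log (1 + Real.exp (-(t + u))) - Real.log (1 + Real.exp (-t)))) := by
      funext t
      rw [hF]
      simp only
      rw [log_one_add_exp (t + u), log_one_add_exp t]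
      ring
    rw [hrw]
    have h1 := tendsto_log_one_add_exp_neg
    have h2 : Tendsto (fun t : ℝ => Real.log (1 + Real.exp (-(t + u)))) atTop (nhds 0) :=
      tendsto_log_one_add_exp_neg.comp (tendsto_atTop_add_const_right _ u tendsto_id)
    have := ((tendsto_const_nhds (x := u)).add (h2.sub h1)).const_mul c
    simpa using this
  rw [MeasureTheory.integral_of_hasDerivAt_of_tendsto hderiv hint hbot htop]
  rw [hc, Real.exp_neg]
  have he : Real.exp u ≠ 0 := (Real.exp_pos u).ne'
  field_simp
  ring
end

section
/- For every w > 0 and u ∈ ℝ, ∫_{-∞}^{∞} (sin²(π u z)/z²) · cos(2π w z) dz = π² · max(|u| - w, 0). -/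
open MeasureTheory Real

open scoped FourierTransform

noncomputable section

namespace SinSqAux

open Complex

/-- Antiderivative computation: `∫_0^a (a - x) e^{icx} dx`. -/
lemma key_int (a c : ℝ) (hc : c ≠ 0) :
    ∫ x in (0:ℝ)..a, ((a : ℂ) - x) * Complex.exp (c * x * Complex.I) =
      (1 - Complex.exp (c * a * Complex.I)) / (c : ℂ) ^ 2 + a * Complex.I / c := by
  have hc' : (c : ℂ) ≠ 0 := Complex.ofReal_ne_zero.2 hc
  have hci : (c : ℂ) * Complex.I ≠ 0 := mul_ne_zero hc' Complex.I_ne_zero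
  set G : ℝ → ℂ := fun x =>
    ((a : ℂ) - x) * Complex.exp ((c : ℂ) * x * Complex.I) / ((c : ℂ) * Complex.I)
      + Complex.exp ((c : ℂ) * x * Complex.I) / ((c : ℂ) * Complex.I) ^ 2 with hGdef
  have hderiv : ∀ x ∈ Set.uIcc (0:ℝ) a, HasDerivAt G
      (((a : ℂ) - x) * Complex.exp ((c : ℂ) * x * Complex.I)) x := by
    intro x _
    have hid : HasDerivAt (fun x : ℝ => (x : ℂ)) 1 x := by
      simpa using (hasDerivAt_id x).ofReal_comp
    have harg : HasDerivAt (fun x : ℝ => (c : ℂ) * x * Complex.I)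
        ((c : ℂ) * Complex.I) x := by
      have := ((hid.const_mul (c : ℂ)).mul_const Complex.I)
      simpa [mul_comm, mul_assoc] using this
    have he : HasDerivAt (fun x : ℝ => Complex.exp ((c : ℂ) * x * Complex.I))
        (Complex.exp ((c : ℂ) * x * Complex.I) * ((c : ℂ) * Complex.I)) x := harg.cexp
    have hsub : HasDerivAt (fun x : ℝ => ((a : ℂ) - x)) (-1) x := by
      simpa using (hid.const_sub (a : ℂ))
    have h1 : HasDerivAt (fun x : ℝ =>
        ((a : ℂ) - x) * Complex.exp ((c : ℂ) * x * Complex.I) / ((c : ℂ) * Complex.I))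
        (((-1) * Complex.exp ((c : ℂ) * x * Complex.I)
          + ((a : ℂ) - x) * (Complex.exp ((c : ℂ) * x * Complex.I) * ((c : ℂ) * Complex.I)))
          / ((c : ℂ) * Complex.I)) x := (hsub.mul he).div_const _
    have h2 : HasDerivAt (fun x : ℝ =>
        Complex.exp ((c : ℂ) * x * Complex.I) / ((c : ℂ) * Complex.I) ^ 2)
        ((Complex.exp ((c : ℂ) * x * Complex.I) * ((c : ℂ) * Complex.I))
          / ((c : ℂ) * Complex.I) ^ 2) x := he.div_const _
    have := h1.add h2
    rw [hGdef]
    convert this using 1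
    · rfl
    · rfl
    rw [div_add_div _ _ hci (pow_ne_zero 2 hci), eq_div_iff (mul_ne_zero hci (pow_ne_zero 2 hci))]
    ring
  have hint : IntervalIntegrable
      (fun x : ℝ => ((a : ℂ) - x) * Complex.exp ((c : ℂ) * x * Complex.I))
      volume 0 a := by
    apply Continuous.intervalIntegrable
    fun_prop
  have := intervalIntegral.integral_eq_sub_of_hasDerivAt hderiv hint
  rw [this, hGdef]
  have hI2 : ((c : ℂ) * Complex.I) ^ 2 = -(c : ℂ) ^ 2 := by
    rw [mul_pow, Complex.I_sq]; ring
  simp only [Complex.ofReal_zero, mul_zero, zero_mul, Complex.exp_zero, sub_zero, sub_self]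
  rw [hI2]
  field_simp
  ring_nf
  simp only [Complex.I_sq]
  ring
end SinSqAux

end

namespace SinSqAux

open Complex

/-- The triangle function, as a complex-valued function. -/
noncomputable def tri (a : ℝ) : ℝ → ℂ := fun x => ((Real.pi ^ 2 * max (a - |x|) 0 : ℝ) : ℂ)

lemma tri_continuous (a : ℝ) : Continuous (tri a) := by
  apply Complex.continuous_ofReal.comp
  exact continuous_const.mul ((continuous_const.sub _root_.continuous_abs).max continuous_const)

lemma tri_eq_zero {a x : ℝ} (hx : x ∉ Set.Icc (-a) a) : tri a x = 0 := by
  have h : a < |x| := by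
    rcases lt_or_ge a |x| with h | h
    · exact h
    · exact absurd (abs_le.1 h) (by simpa [Set.mem_Icc] using hx)
  simp [tri, max_eq_right (by linarith : a - |x| ≤ 0)]

lemma tri_integrable (a : ℝ) : Integrable (tri a) := by
  apply Continuous.integrable_of_hasCompactSupport (tri_continuous a)
  apply HasCompactSupport.intro (isCompact_Icc (a := -a) (b := a))
  exact fun x hx => tri_eq_zero hx

lemma fourier_tri (a : ℝ) (ha : 0 ≤ a) {z : ℝ} (hz : z ≠ 0) :
    𝓕 (tri a) z = ((Real.sin (Real.pi * a * z) ^ 2 / z ^ 2 : ℝ) : ℂ) := by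
  have hπ : Real.pi ≠ 0 := Real.pi_ne_zero
  set c : ℝ := 2 * Real.pi * z with hcdef
  have hc : c ≠ 0 := mul_ne_zero (mul_ne_zero two_ne_zero hπ) hz
  set F : ℝ → ℂ := fun v =>
    Complex.exp (↑(-2 * Real.pi * v * z) * Complex.I) • tri a v with hFdef
  have hFcont : Continuous F := by
    apply Continuous.fun_smul _ (tri_continuous a)
    apply Complex.continuous_exp.comp
    fun_prop
  have h1 : 𝓕 (tri a) z = ∫ v : ℝ, F v :=
    Real.fourier_real_eq_integral_exp_smul _ _
  have h2 : ∫ v : ℝ, F v = ∫ v in Set.Icc (-a) a, F v :=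
    (MeasureTheory.setIntegral_eq_integral_of_forall_compl_eq_zero
      (fun x hx => by simp [hFdef, tri_eq_zero hx])).symm
  have h3 : ∫ v in Set.Icc (-a) a, F v = ∫ v in (-a)..a, F v := by
    rw [MeasureTheory.integral_Icc_eq_integral_Ioc,
      intervalIntegral.integral_of_le (by linarith : -a ≤ a)]
  have h4 : ∫ v in (-a)..a, F v = (∫ v in (-a)..(0:ℝ), F v) + ∫ v in (0:ℝ)..a, F v :=
    (intervalIntegral.integral_add_adjacent_intervals
      (hFcont.intervalIntegrable _ _) (hFcont.intervalIntegrable _ _)).symm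
  have hR : ∫ v in (0:ℝ)..a, F v
      = ((Real.pi : ℂ))^2 * ((1 - Complex.exp (↑(-c) * ↑a * Complex.I)) / ((-c : ℝ) : ℂ)^2
          + ↑a * Complex.I / ((-c : ℝ) : ℂ)) := by
    have hcong : ∫ v in (0:ℝ)..a, F v = ∫ x in (0:ℝ)..a,
        ((Real.pi : ℂ))^2 * (((a:ℂ) - x) * Complex.exp (↑(-c) * x * Complex.I)) := by
      apply intervalIntegral.integral_congr
      intro x hx
      rw [Set.uIcc_of_le ha] at hx
      obtain ⟨hx0, hxa⟩ := hx
      simp only [hFdef, tri, _root_.abs_of_nonneg hx0,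
        max_eq_left (by linarith : (0:ℝ) ≤ a - x), smul_eq_mul, hcdef]
      push_cast
      ring_nf
    rw [hcong, intervalIntegral.integral_const_mul, key_int a (-c) (neg_ne_zero.2 hc)]
  have hL : ∫ v in (-a)..(0:ℝ), F v
      = ((Real.pi : ℂ))^2 * ((1 - Complex.exp (↑c * ↑a * Complex.I)) / ((c : ℝ) : ℂ)^2
          + ↑a * Complex.I / ((c : ℝ) : ℂ)) := by
    have hneg := intervalIntegral.integral_comp_neg (a := (0:ℝ)) (b := a) F
    rw [neg_zero] at hneg
    rw [← hneg]
    have hcong : ∫ x in (0:ℝ)..a, F (-x) = ∫ x in (0:ℝ)..a,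
        ((Real.pi : ℂ))^2 * (((a:ℂ) - x) * Complex.exp (↑c * x * Complex.I)) := by
      apply intervalIntegral.integral_congr
      intro x hx
      rw [Set.uIcc_of_le ha] at hx
      obtain ⟨hx0, hxa⟩ := hx
      simp only [hFdef, tri, abs_neg, _root_.abs_of_nonneg hx0,
        max_eq_left (by linarith : (0:ℝ) ≤ a - x), smul_eq_mul, hcdef]
      push_cast
      ring_nf
    rw [hcong, intervalIntegral.integral_const_mul, key_int a c hc]
  rw [h1, h2, h3, h4, hL, hR]
  have hc' : ((c : ℝ) : ℂ) ≠ 0 := Complex.ofReal_ne_zero.2 hc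
  have hgen : ∀ (p d A X Y : ℂ), d ≠ 0 →
      p * ((1 - X) / d ^ 2 + A * Complex.I / d)
        + p * ((1 - Y) / (-d) ^ 2 + A * Complex.I / (-d))
      = p * ((2 - (X + Y)) / d ^ 2) := by
    intro p d A X Y hd
    have h1 : (-d) ^ 2 = d ^ 2 := by ring
    have h2 : A * Complex.I / -d = -(A * Complex.I / d) := by rw [div_neg]
    rw [h1, h2, show ∀ S T t : ℂ, p * (S + t) + p * (T + -t) = p * (S + T) from
      fun S T t => by ring, ← add_div]
    ring
  have hstep := hgen (((Real.pi : ℂ))^2) ((c : ℝ) : ℂ) (a : ℂ)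
    (Complex.exp (↑c * ↑a * Complex.I)) (Complex.exp (↑(-c) * ↑a * Complex.I)) hc'
  rw [show (((-c : ℝ)) : ℂ) = -((c:ℝ):ℂ) from Complex.ofReal_neg c] at *
  rw [hstep]
  have hexp : Complex.exp (↑c * ↑a * Complex.I) + Complex.exp (-↑c * ↑a * Complex.I)
      = 2 * ((Real.cos (c * a) : ℝ) : ℂ) := by
    rw [show (-(c:ℂ)) * ↑a * Complex.I = (-(↑c * ↑a)) * Complex.I by ring,
      show (c:ℂ) * ↑a * Complex.I = ((↑c * ↑a) : ℂ) * Complex.I by ring,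
      Complex.exp_mul_I, Complex.exp_mul_I, Complex.cos_neg, Complex.sin_neg,
      ← Complex.ofReal_mul, ← Complex.ofReal_cos]
    ring
  rw [hexp]
  have hcos : Real.cos (c * a) = 1 - 2 * Real.sin (Real.pi * a * z)^2 := by
    have h2 : c * a = 2 * (Real.pi * a * z) := by rw [hcdef]; ring
    rw [h2, Real.cos_two_mul, Real.cos_sq']
    ring
  rw [hcos]
  have hre : ((Real.pi:ℂ))^2 * ((2 - 2 * (((1:ℝ) - 2 * Real.sin (Real.pi*a*z)^2 : ℝ) : ℂ))
        / ((c:ℝ):ℂ)^2)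
      = ((Real.pi^2 * ((2 - 2 * (1 - 2 * Real.sin (Real.pi*a*z)^2)) / c^2) : ℝ) : ℂ) := by
    push_cast
    ring
  rw [hre]
  norm_cast
  rw [hcdef]
  field_simp
  ring

lemma fourier_tri_integrable (a : ℝ) (ha : 0 ≤ a) : Integrable (𝓕 (tri a)) := by
  have hcont : Continuous (𝓕 (tri a)) :=
    VectorFourier.fourierIntegral_continuous Real.continuous_fourierChar
      (by exact continuous_inner) (tri_integrable a)
  have hbound : ∀ z : ℝ, z ≠ 0 → ‖𝓕 (tri a) z‖ ≤ (z ^ 2)⁻¹ := by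
    intro z hz
    rw [fourier_tri a ha hz, Complex.norm_real, Real.norm_eq_abs,
      _root_.abs_of_nonneg (by positivity), div_eq_mul_inv]
    have h1 : Real.sin (Real.pi * a * z) ^ 2 ≤ 1 := Real.sin_sq_le_one _
    have h2 : (0:ℝ) ≤ (z ^ 2)⁻¹ := by positivity
    nlinarith
  have hpow : IntegrableOn (fun z : ℝ => (z ^ 2)⁻¹) (Set.Ioi 1) := by
    have h := (integrableOn_Ioi_rpow_iff (zero_lt_one)).2 (by norm_num : (-2 : ℝ) < -1)
    apply h.congr_fun ?_ measurableSet_Ioi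
    intro x hx
    have hx0 : (0:ℝ) < x := lt_trans zero_lt_one hx
    show x ^ ((-2 : ℝ)) = (x ^ 2)⁻¹
    rw [show ((-2:ℝ)) = ((-2:ℤ):ℝ) by norm_num, Real.rpow_intCast, zpow_neg,
      show ((2:ℤ)) = ((2:ℕ):ℤ) from rfl, zpow_natCast]
  have hpow' : IntegrableOn (fun z : ℝ => (z ^ 2)⁻¹) (Set.Iio (-1)) := by
    have h := (Measure.measurePreserving_neg (volume : Measure ℝ)).integrableOn_comp_preimage
      (Homeomorph.neg ℝ).measurableEmbedding
      (f := fun z : ℝ => (z ^ 2)⁻¹) (s := Set.Ioi (1:ℝ))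
    have h2 := h.2 hpow
    have h3 : ((Neg.neg : ℝ → ℝ) ⁻¹' Set.Ioi 1 : Set ℝ) = Set.Iio (-1) := by
      ext x
      simp only [Set.mem_preimage, Set.mem_Ioi, Set.mem_Iio]
      constructor <;> intro h <;> linarith
    rw [h3] at h2
    apply h2.congr_fun ?_ measurableSet_Iio
    intro x _
    simp [Function.comp, neg_sq]
  have hmono : ∀ (s : Set ℝ), MeasurableSet s → IntegrableOn (fun z : ℝ => (z ^ 2)⁻¹) s →
      (∀ z ∈ s, z ≠ 0) → IntegrableOn (𝓕 (tri a)) s := by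
    intro s hs hint hne
    apply Integrable.mono' hint hcont.aestronglyMeasurable.restrict
    refine (ae_restrict_iff' hs).2 (Filter.Eventually.of_forall fun z hzs => ?_)
    exact hbound z (hne z hzs)
  have h1 : IntegrableOn (𝓕 (tri a)) (Set.Icc (-1) 1) := hcont.integrableOn_Icc
  have h2 : IntegrableOn (𝓕 (tri a)) (Set.Iio (-1)) := by
    apply hmono _ measurableSet_Iio hpow'
    intro z hz h0
    rw [h0] at hz
    norm_num [Set.mem_Iio] at hz
  have h3 : IntegrableOn (𝓕 (tri a)) (Set.Ioi 1) := by
    apply hmono _ measurableSet_Ioi hpow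
    intro z hz h0
    rw [h0] at hz
    norm_num [Set.mem_Ioi] at hz
  have huniv : (Set.univ : Set ℝ) = Set.Iio (-1:ℝ) ∪ Set.Icc (-1) 1 ∪ Set.Ioi 1 := by
    ext x
    simp only [Set.mem_univ, Set.mem_union, Set.mem_Iio, Set.mem_Icc, Set.mem_Ioi, true_iff]
    by_cases hx1 : x < -1
    · exact Or.inl (Or.inl hx1)
    · by_cases hx2 : x ≤ 1
      · exact Or.inl (Or.inr ⟨by linarith, hx2⟩)
      · exact Or.inr (by linarith)
  rw [← integrableOn_univ, huniv]
  exact (h2.union h1).union h3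

end SinSqAux

open SinSqAux in
theorem integral_sin_sq_cos (w u : ℝ) (hw : 0 < w) :
    ∫ z : ℝ, (Real.sin (Real.pi * u * z)) ^ 2 / z ^ 2 * Real.cos (2 * Real.pi * w * z) =
      Real.pi ^ 2 * max (|u| - w) 0 := by
  set a := |u| with hadef
  have ha : 0 ≤ a := abs_nonneg u
  have hTint := tri_integrable a
  have hGint := fourier_tri_integrable a ha
  have hinv : 𝓕⁻ (𝓕 (tri a)) w = tri a w :=
    hTint.fourierInv_fourier_eq hGint (tri_continuous a).continuousAt
  rw [Real.fourierInv_eq_fourier_neg,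
    Real.fourier_real_eq_integral_exp_smul] at hinv
  have hsin : ∀ z : ℝ, Real.sin (Real.pi * a * z) ^ 2 = Real.sin (Real.pi * u * z) ^ 2 := by
    intro z
    rcases abs_cases u with ⟨h, _⟩ | ⟨h, _⟩
    · rw [hadef, h]
    · rw [hadef, h, show Real.pi * -u * z = -(Real.pi * u * z) by ring, Real.sin_neg]
      ring
  set G : ℝ → ℂ := fun z => ((Real.sin (Real.pi * u * z) ^ 2 / z ^ 2 : ℝ) : ℂ) with hGdef
  have hae : 𝓕 (tri a) =ᵐ[volume] G := by
    have h0 : ∀ᵐ z : ℝ, z ≠ 0 := by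
      refine ae_iff.2 ?_
      simp only [ne_eq, not_not, Set.setOf_eq_eq_singleton]
      exact measure_singleton 0
    filter_upwards [h0] with z hz
    rw [fourier_tri a ha hz, hGdef, hsin]
  have hGint' : Integrable G := hGint.congr hae
  have heq : (∫ v : ℝ, Complex.exp (↑(-2 * Real.pi * v * -w) * Complex.I) • 𝓕 (tri a) v)
      = ∫ v : ℝ, Complex.exp (↑(-2 * Real.pi * v * -w) * Complex.I) • G v := by
    apply integral_congr_ae
    filter_upwards [hae] with v hv
    rw [hv]
  rw [heq] at hinv
  have hint2 : Integrable
      (fun v : ℝ => Complex.exp (↑(-2 * Real.pi * v * -w) * Complex.I) • G v) := by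
    apply Integrable.mono' hGint'.norm
    · apply AEStronglyMeasurable.fun_smul _ hGint'.aestronglyMeasurable
      apply Continuous.aestronglyMeasurable
      apply Complex.continuous_exp.comp
      fun_prop
    · refine Filter.Eventually.of_forall fun v => ?_
      rw [smul_eq_mul, norm_mul, Complex.norm_exp_ofReal_mul_I, one_mul]
  have hptwise : ∀ v : ℝ,
      (Complex.exp (↑(-2 * Real.pi * v * -w) * Complex.I) • G v).re
        = Real.sin (Real.pi * u * v) ^ 2 / v ^ 2 * Real.cos (2 * Real.pi * w * v) := by
    intro v
    rw [smul_eq_mul, hGdef]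
    simp only [Complex.mul_re, Complex.ofReal_re, Complex.ofReal_im, mul_zero, sub_zero,
      Complex.exp_ofReal_mul_I_re]
    rw [show -2 * Real.pi * v * -w = 2 * Real.pi * w * v by ring]
    ring
  calc ∫ z : ℝ, (Real.sin (Real.pi * u * z)) ^ 2 / z ^ 2 * Real.cos (2 * Real.pi * w * z)
      = ∫ v : ℝ, (Complex.exp (↑(-2 * Real.pi * v * -w) * Complex.I) • G v).re := by
        congr 1
        ext v
        rw [hptwise v]
    _ = (∫ v : ℝ, Complex.exp (↑(-2 * Real.pi * v * -w) * Complex.I) • G v).re := by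
        have h := integral_re hint2
        simpa [RCLike.re_to_complex] using h
    _ = (tri a w).re := by rw [hinv]
    _ = Real.pi ^ 2 * max (|u| - w) 0 := by
        show ((Real.pi ^ 2 * max (a - |w|) 0 : ℝ) : ℂ).re = _
        rw [Complex.ofReal_re, _root_.abs_of_pos hw, hadef]
end

section
/- Let Ψ be a symmetric shape function, i.e. Ψ : ℝ → [0,1] differentiable, non-increasing, with 1 - Ψ(-x) = Ψ(x) for all x, Ψ ∈ L¹(0,∞), and suitable integrability of x·Ψ'(x)·Ψ(x)^k(1-Ψ(x))^{n-1-k}. Then for every m ≥ 1 the constant B^{2m+1}_Ψ := Σ_{k=0}^{2m} b^{2m+1}_k ∫ x·(-Ψ'(x))·Ψ(x)^k·(1-Ψ(x))^{2m-k} dx vanishes: B^{2m+1}_Ψ = 0. -/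
open MeasureTheory Finset Set

/-- The coefficients `b^n_k` (as real numbers). -/
noncomputable def bcoef (n k : ℕ) : ℝ :=
  ∑ l ∈ Finset.Icc 1 (k + 1),
    (-1 : ℝ) ^ (l + 1) * (Nat.choose (n - l) (k + 1 - l) : ℝ) *
      ∑ c ∈ Finset.univ.filter (fun c : Composition n => c.length = l),
        ((n.factorial : ℝ) / ((c.blocks.map Nat.factorial).prod : ℝ))

/-! ### Combinatorial lemmas -/

lemma fd_pow : ∀ (n j : ℕ), j ≤ n → (fwdDiff (1:ℝ))^[n+1] (fun x : ℝ => x ^ j) = 0 := by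
  intro n
  induction n with
  | zero =>
    intro j hj
    interval_cases j
    rw [Function.iterate_one]
    ext x
    simp [fwdDiff]
  | succ n IH =>
    intro j hj
    rw [Function.iterate_succ_apply]
    have hΔ : fwdDiff (1:ℝ) (fun x : ℝ => x ^ j)
        = ∑ i ∈ range j, ((j.choose i : ℝ) • fun x : ℝ => x ^ i) := by
      funext x
      simp only [fwdDiff, Finset.sum_apply, Pi.smul_apply, smul_eq_mul]
      rw [add_pow]
      rw [Finset.sum_range_succ]
      simp [mul_comm]
    rw [hΔ, fwdDiff_iter_finset_sum]
    refine Finset.sum_eq_zero fun i hi => ?_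
    rw [fwdDiff_iter_const_smul, IH i (by have := Finset.mem_range.1 hi; omega), smul_zero]

lemma alt_sum (n : ℕ) (hn : Odd n) (y : ℝ) :
    ∑ i ∈ range (n+2), (-1:ℝ)^i * ((n+1).choose i : ℝ) * (y + i)^n = 0 := by
  have h := fwdDiff_iter_eq_sum_shift (1:ℝ) (fun x : ℝ => x ^ n) (n+1) y
  rw [fd_pow n n le_rfl] at h
  simp only [Pi.zero_apply, nsmul_eq_mul, mul_one, zsmul_eq_mul] at h
  have h' : ∑ k ∈ range (n+2), (-1:ℝ)^(n+1-k) * ((n+1).choose k : ℝ) * (y + k)^n = 0 := by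
    rw [← h.symm]
    refine Finset.sum_congr rfl fun k hk => ?_
    push_cast
    ring
  rw [← h']
  refine Finset.sum_congr rfl fun k hk => ?_
  have hk' : k ≤ n + 1 := by have := Finset.mem_range.1 hk; omega
  have hsign : (-1:ℝ)^k = (-1:ℝ)^(n+1-k) := by
    have h1 : (-1:ℝ)^(n+1-k) * (-1:ℝ)^k = 1 := by
      rw [← pow_add, Nat.sub_add_cancel hk']
      exact (hn.add_one).neg_one_pow
    have h2 : (-1:ℝ)^k * (-1:ℝ)^k = 1 := by
      rw [← pow_add, ← two_mul]
      exact (even_two_mul k).neg_one_pow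
    have := h1.trans h2.symm
    exact mul_right_cancel₀ (by positivity) this.symm
  rw [hsign]

lemma vand (j : ℕ) : ∀ (n r : ℕ),
    ∑ l ∈ range (n+1), (l.choose j) * ((n-l).choose r) = (n+1).choose (j+r+1) := by
  intro n
  induction n with
  | zero =>
    intro r
    rw [range_one, sum_singleton]
    match j, r with
    | 0, 0 => simp
    | 0, r+1 => simp [Nat.choose_zero_succ, Nat.choose_eq_zero_of_lt (show 1 < r+1+1 by omega)]
    | j+1, r => simp [Nat.choose_zero_succ, Nat.choose_eq_zero_of_lt (show 1 < j+1+r+1 by omega)]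
  | succ n IH =>
    intro r
    rcases Nat.eq_zero_or_pos r with hr | hr
    · subst hr
      simp only [Nat.choose_zero_right, mul_one]
      have hs : ∑ l ∈ range (n+2), l.choose j = (n+2).choose (j+1) := by
        rw [← Nat.sum_Icc_choose (n+1) j]
        rcases le_or_gt j (n+1) with h | h
        · rw [Finset.range_eq_Ico]
          rw [← Finset.sum_Ico_consecutive _ (Nat.zero_le j) (by omega : j ≤ n+2)]
          have h0 : ∑ l ∈ Finset.Ico 0 j, l.choose j = 0 := by
            refine Finset.sum_eq_zero fun l hl => ?_
            exact Nat.choose_eq_zero_of_lt (by simp at hl; omega)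
          rw [h0, zero_add, ← Finset.Ico_add_one_right_eq_Icc]; rfl
        · have h1 : ∑ l ∈ range (n+2), l.choose j = 0 :=
            Finset.sum_eq_zero fun l hl => Nat.choose_eq_zero_of_lt (by simp at hl; omega)
          have h2 : ∑ l ∈ Finset.Icc j (n+1), l.choose j = 0 := by
            rw [Finset.Icc_eq_empty_of_lt h]; simp
          rw [h1, h2]
      simpa using hs
    · obtain ⟨r', rfl⟩ := Nat.exists_eq_add_of_le hr
      rw [Finset.sum_range_succ]
      have hlast : (n+1).choose j * ((n+1-(n+1)).choose (1+r')) = 0 := by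
        simp [Nat.choose_eq_zero_of_lt]
      rw [hlast, add_zero]
      have hcong : ∑ l ∈ range (n+1), l.choose j * ((n+1-l).choose (1+r'))
          = ∑ l ∈ range (n+1), (l.choose j * ((n-l).choose r') + l.choose j * ((n-l).choose (r'+1))) := by
        refine Finset.sum_congr rfl fun l hl => ?_
        have hl' : l ≤ n := by simp at hl; omega
        have : n + 1 - l = (n - l) + 1 := by omega
        rw [this, show 1 + r' = r' + 1 by omega, Nat.choose_succ_succ, mul_add]
      rw [hcong, Finset.sum_add_distrib, IH r', IH (r'+1)]
      have e1 : j + (1 + r') + 1 = (j + r' + 1) + 1 := by omega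
      have e2 : j + (r' + 1) + 1 = (j + r' + 1) + 1 := by omega
      rw [e1, e2, Nat.choose_succ_succ (n+1) (j+r'+1)]

lemma list_ofFn_getD (L : List ℕ) (l : ℕ) (hL : L.length = l) :
    List.ofFn (fun i : Fin l => L.getD i.1 0) = L := by
  apply List.ext_getElem
  · simp [hL]
  · intro k h1 h2
    simp only [List.getElem_ofFn]
    rw [List.getD_eq_getElem]

lemma stepA (n l : ℕ) :
    (∑ c ∈ Finset.univ.filter (fun c : Composition n => c.length = l),
      ((n.factorial : ℝ) / ((c.blocks.map Nat.factorial).prod : ℝ)))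
    = ∑ f ∈ (Finset.piAntidiag (Finset.univ : Finset (Fin l)) n).filter
        (fun f => ∀ i, f i ≠ 0), (Nat.multinomial Finset.univ f : ℝ) := by
  refine Finset.sum_bij' (fun c _ => fun i : Fin l => c.blocks.getD i.1 0)
    (fun f hf => ?_) ?_ ?_ ?_ ?_ ?_
  · have hf' := hf
    rw [Finset.mem_filter, Finset.mem_piAntidiag] at hf'
    exact ⟨List.ofFn f,
      fun {i} hi => by
        rw [List.mem_ofFn] at hi
        obtain ⟨j, rfl⟩ := hi
        exact Nat.pos_of_ne_zero (hf'.2 j),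
      by rw [List.sum_ofFn]; exact hf'.1.1⟩
  · intro c hc
    rw [Finset.mem_filter] at hc ⊢
    have hlen : c.blocks.length = l := hc.2
    have hof : List.ofFn (fun i : Fin l => c.blocks.getD i.1 0) = c.blocks :=
      list_ofFn_getD _ _ hlen
    constructor
    · rw [Finset.mem_piAntidiag]
      refine ⟨?_, fun i _ => Finset.mem_univ i⟩
      calc ∑ i : Fin l, c.blocks.getD i.1 0
          = (List.ofFn (fun i : Fin l => c.blocks.getD i.1 0)).sum := by rw [List.sum_ofFn]
        _ = c.blocks.sum := by rw [hof]
        _ = n := c.blocks_sum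
    · intro i
      have hmem : c.blocks.getD i.1 0 ∈ c.blocks := by
        rw [List.getD_eq_getElem _ _ (by omega : i.1 < c.blocks.length)]
        exact List.getElem_mem _
      exact (c.blocks_pos hmem).ne'
  · intro f hf
    rw [Finset.mem_filter]
    exact ⟨Finset.mem_univ _, by simp [Composition.length]⟩
  · intro c hc
    rw [Finset.mem_filter] at hc
    exact Composition.ext (list_ofFn_getD _ _ hc.2)
  · intro f hf
    funext i
    simp only [Composition.length]
    rw [List.getD_eq_getElem _ _ (by simp : i.1 < (List.ofFn f).length)]
    simp
  · intro c hc
    rw [Finset.mem_filter] at hc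
    have hlen : c.blocks.length = l := hc.2
    have hof : List.ofFn (fun i : Fin l => c.blocks.getD i.1 0) = c.blocks :=
      list_ofFn_getD _ _ hlen
    have hsum : ∑ i : Fin l, c.blocks.getD i.1 0 = n := by
      calc ∑ i : Fin l, c.blocks.getD i.1 0
          = (List.ofFn (fun i : Fin l => c.blocks.getD i.1 0)).sum := by rw [List.sum_ofFn]
        _ = n := by rw [hof]; exact c.blocks_sum
    have hprod : (c.blocks.map Nat.factorial).prod
        = ∏ i : Fin l, (c.blocks.getD i.1 0).factorial := by
      conv_lhs => rw [← hof]
      rw [List.map_ofFn, List.prod_ofFn]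
      refine Finset.prod_congr rfl fun i _ => ?_
      simp [Function.comp]
    have hspec := Nat.multinomial_spec (Finset.univ : Finset (Fin l))
      (fun i => c.blocks.getD i.1 0)
    rw [hsum] at hspec
    have hposn : 0 < (c.blocks.map Nat.factorial).prod := by
      apply List.prod_pos
      intro a ha
      rw [List.mem_map] at ha
      obtain ⟨b, _, rfl⟩ := ha
      exact Nat.factorial_pos b
    have hne : ((c.blocks.map Nat.factorial).prod : ℝ) ≠ 0 := by
      exact_mod_cast hposn.ne'
    rw [div_eq_iff hne]
    rw [hprod]
    push_cast [← hspec]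
    ring

lemma multinomial_ones (l n : ℕ) (s : Finset (Fin l)) :
    ∑ f ∈ Finset.piAntidiag s n, (Nat.multinomial s f : ℝ) = (s.card : ℝ)^n := by
  have h := Finset.sum_pow_eq_sum_piAntidiag s (fun _ => (1:ℝ)) n
  simp only [Finset.sum_const, nsmul_eq_mul, mul_one, one_pow, Finset.prod_const_one] at h
  rw [← h]

lemma multinomial_sub (l : ℕ) (s : Finset (Fin l)) (f : Fin l → ℕ)
    (h : ∀ i, f i ≠ 0 → i ∈ s) :
    Nat.multinomial Finset.univ f = Nat.multinomial s f := by
  unfold Nat.multinomial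
  have h1 : ∑ i ∈ s, f i = ∑ i ∈ Finset.univ, f i :=
    Finset.sum_subset (Finset.subset_univ s) (fun i _ hi => by
      by_contra hne; exact hi (h i hne))
  have h2 : ∏ i ∈ s, (f i).factorial = ∏ i ∈ Finset.univ, (f i).factorial :=
    Finset.prod_subset (Finset.subset_univ s) (fun i _ hi => by
      have : f i = 0 := by by_contra hne; exact hi (h i hne)
      rw [this]; rfl)
  rw [h1, h2]

lemma piAntidiag_eq_filter (l n : ℕ) (s : Finset (Fin l)) :
    Finset.piAntidiag s n = (Finset.piAntidiag (Finset.univ : Finset (Fin l)) n).filter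
      (fun f => ∀ i, f i ≠ 0 → i ∈ s) := by
  ext f
  simp only [Finset.mem_filter, Finset.mem_piAntidiag]
  constructor
  · rintro ⟨hsum, hsupp⟩
    refine ⟨⟨?_, fun i _ => Finset.mem_univ i⟩, hsupp⟩
    rw [← hsum]
    exact (Finset.sum_subset (Finset.subset_univ s) (fun i _ hi => by
      by_contra hne; exact hi (hsupp i hne))).symm
  · rintro ⟨⟨hsum, _⟩, hsupp⟩
    refine ⟨?_, hsupp⟩
    rw [← hsum]
    exact Finset.sum_subset (Finset.subset_univ s) (fun i _ hi => by
      by_contra hne; exact hi (hsupp i hne))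

lemma inner_alt (l : ℕ) (f : Fin l → ℕ) :
    ∑ s ∈ (Finset.univ : Finset (Fin l)).powerset,
      (if ∀ i, f i ≠ 0 → i ∈ s then ((-1:ℝ)^(l - s.card)) else 0)
    = if ∀ i, f i ≠ 0 then 1 else 0 := by
  classical
  rw [Finset.sum_ite, Finset.sum_const_zero, add_zero]
  set u : Finset (Fin l) := Finset.univ.filter (fun i => f i ≠ 0) with hu
  have key : ∀ s : Finset (Fin l), (∀ i, f i ≠ 0 → i ∈ s) ↔ u ⊆ s := by
    intro s
    constructor
    · intro h i hi
      rw [hu, Finset.mem_filter] at hi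
      exact h i hi.2
    · intro h i hi
      exact h (by rw [hu, Finset.mem_filter]; exact ⟨Finset.mem_univ i, hi⟩)
  have : (∑ s ∈ ((Finset.univ : Finset (Fin l)).powerset.filter
        (fun s => ∀ i, f i ≠ 0 → i ∈ s)), ((-1:ℝ)^(l - s.card)))
      = ∑ t ∈ uᶜ.powerset, (-1:ℝ)^t.card := by
    refine Finset.sum_nbij' (fun s => sᶜ) (fun t => tᶜ) ?_ ?_ ?_ ?_ ?_
    · intro s hs
      rw [Finset.mem_filter] at hs
      rw [Finset.mem_powerset]
      rw [key] at hs
      exact Finset.compl_subset_compl.2 hs.2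
    · intro t ht
      rw [Finset.mem_powerset] at ht
      rw [Finset.mem_filter, key]
      exact ⟨Finset.mem_powerset.2 (Finset.subset_univ _),
        by rw [← compl_compl u]; exact Finset.compl_subset_compl.2 ht⟩
    · intro s _; exact compl_compl s
    · intro t _; exact compl_compl t
    · intro s _
      congr 1
      rw [Finset.card_compl]
      simp
  rw [this]
  have hps : ∑ t ∈ uᶜ.powerset, (-1:ℝ)^t.card
      = ∑ t ∈ uᶜ.powerset, (((-1:ℤ)^t.card : ℤ) : ℝ) := by push_cast; rfl
  rw [hps, ← Int.cast_sum, Finset.sum_powerset_neg_one_pow_card]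
  by_cases hall : ∀ i, f i ≠ 0
  · have : uᶜ = ∅ := by
      rw [Finset.compl_eq_empty_iff]
      rw [hu]
      rw [Finset.filter_eq_self.2 (fun i _ => hall i)]
    rw [if_pos this, if_pos hall]
    norm_num
  · have : uᶜ ≠ ∅ := by
      rw [Ne, Finset.compl_eq_empty_iff, hu]
      intro hcon
      apply hall
      intro i
      have := Finset.filter_eq_self.1 hcon i (Finset.mem_univ i)
      exact this
    rw [if_neg this, if_neg hall]
    norm_num

lemma stepB (n l : ℕ) :
    ∑ f ∈ (Finset.piAntidiag (Finset.univ : Finset (Fin l)) n).filter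
        (fun f => ∀ i, f i ≠ 0), (Nat.multinomial Finset.univ f : ℝ)
    = ∑ j ∈ Finset.range (l+1), (-1:ℝ)^(l-j) * (l.choose j : ℝ) * (j:ℝ)^n := by
  classical
  have key : ∑ s ∈ (Finset.univ : Finset (Fin l)).powerset,
      (-1:ℝ)^(l - s.card) * (s.card : ℝ)^n
      = ∑ f ∈ (Finset.piAntidiag (Finset.univ : Finset (Fin l)) n).filter
        (fun f => ∀ i, f i ≠ 0), (Nat.multinomial Finset.univ f : ℝ) := by
    have h1 : ∀ s ∈ (Finset.univ : Finset (Fin l)).powerset,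
        (-1:ℝ)^(l - s.card) * (s.card : ℝ)^n
        = ∑ f ∈ Finset.piAntidiag (Finset.univ : Finset (Fin l)) n,
            (if ∀ i, f i ≠ 0 → i ∈ s then ((-1:ℝ)^(l - s.card)) * (Nat.multinomial Finset.univ f : ℝ) else 0) := by
      intro s _
      rw [← multinomial_ones l n s, Finset.mul_sum, piAntidiag_eq_filter l n s,
        Finset.sum_filter]
      refine Finset.sum_congr rfl fun f _ => ?_
      split_ifs with h
      · rw [multinomial_sub l s f h]
      · rfl
    rw [Finset.sum_congr rfl h1, Finset.sum_comm]
    rw [Finset.sum_filter]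
    refine Finset.sum_congr rfl fun f _ => ?_
    have : ∑ s ∈ (Finset.univ : Finset (Fin l)).powerset,
        (if ∀ i, f i ≠ 0 → i ∈ s then ((-1:ℝ)^(l - s.card)) * (Nat.multinomial Finset.univ f : ℝ) else 0)
        = (∑ s ∈ (Finset.univ : Finset (Fin l)).powerset,
          (if ∀ i, f i ≠ 0 → i ∈ s then ((-1:ℝ)^(l - s.card)) else 0)) * (Nat.multinomial Finset.univ f : ℝ) := by
      rw [Finset.sum_mul]
      refine Finset.sum_congr rfl fun s _ => ?_
      split_ifs <;> simp
    rw [this, inner_alt]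
    split_ifs <;> simp
  rw [← key]
  rw [Finset.powerset_card_disjiUnion]
  erw [Finset.sum_disjiUnion]
  refine Finset.sum_congr ?_ fun j hj => ?_
  · simp [Finset.card_univ]
  · have hcard : ∀ s ∈ Finset.powersetCard j (Finset.univ : Finset (Fin l)), s.card = j :=
      fun s hs => (Finset.mem_powersetCard.1 hs).2
    have : ∑ s ∈ Finset.powersetCard j (Finset.univ : Finset (Fin l)),
        (-1:ℝ)^(l - s.card) * (s.card : ℝ)^n
        = ∑ s ∈ Finset.powersetCard j (Finset.univ : Finset (Fin l)),
        (-1:ℝ)^(l - j) * (j : ℝ)^n := by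
      refine Finset.sum_congr rfl fun s hs => by rw [hcard s hs]
    rw [this, Finset.sum_const, Finset.card_powersetCard, Finset.card_univ, Fintype.card_fin]
    ring

lemma compSum (n l : ℕ) :
    (∑ c ∈ Finset.univ.filter (fun c : Composition n => c.length = l),
      ((n.factorial : ℝ) / ((c.blocks.map Nat.factorial).prod : ℝ)))
    = ∑ j ∈ Finset.range (l+1), (-1:ℝ)^(l-j) * (l.choose j : ℝ) * (j:ℝ)^n :=
  (stepA n l).trans (stepB n l)

lemma neg_one_pow_sub_eq {a b : ℕ} (h : b ≤ a) : (-1:ℝ)^(a-b) = (-1:ℝ)^a * (-1:ℝ)^b := by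
  have h1 : (-1:ℝ)^(a-b) * (-1:ℝ)^b = (-1:ℝ)^a := by rw [← pow_add, Nat.sub_add_cancel h]
  have hb : (-1:ℝ)^b * (-1:ℝ)^b = 1 := by
    rw [← pow_add, ← two_mul]; exact (even_two_mul b).neg_one_pow
  calc (-1:ℝ)^(a-b) = (-1:ℝ)^(a-b) * ((-1:ℝ)^b * (-1:ℝ)^b) := by rw [hb, mul_one]
    _ = ((-1:ℝ)^(a-b) * (-1:ℝ)^b) * (-1:ℝ)^b := by ring
    _ = (-1:ℝ)^a * (-1:ℝ)^b := by rw [h1]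

lemma bcoef_closed (n k : ℕ) (hn : 1 ≤ n) (hk : k ≤ n - 1) :
    bcoef n k = ∑ j ∈ Finset.range (n+2),
      (-1:ℝ)^(j+1) * (j:ℝ)^n * ((n+1).choose (n-k+j) : ℝ) := by
  unfold bcoef
  have step1 : ∀ l ∈ Finset.Icc 1 (k+1),
      (-1 : ℝ) ^ (l + 1) * (Nat.choose (n - l) (k + 1 - l) : ℝ) *
      (∑ c ∈ Finset.univ.filter (fun c : Composition n => c.length = l),
        ((n.factorial : ℝ) / ((c.blocks.map Nat.factorial).prod : ℝ)))
      = ∑ j ∈ Finset.range (n+2),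
          (-1:ℝ)^(j+1) * (j:ℝ)^n * ((l.choose j : ℕ) * ((n-l).choose (n-1-k) : ℕ) : ℝ) := by
    intro l hl
    rw [Finset.mem_Icc] at hl
    rw [compSum n l]
    have hchoose : (Nat.choose (n - l) (k + 1 - l) : ℝ) = (Nat.choose (n-l) (n-1-k) : ℝ) := by
      have hle : k + 1 - l ≤ n - l := by omega
      have harg : n - l - (k + 1 - l) = n - 1 - k := by omega
      rw [← Nat.choose_symm hle, harg]
    rw [hchoose, Finset.mul_sum]
    have hsub : Finset.range (l+1) ⊆ Finset.range (n+2) := by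
      apply Finset.range_subset_range.2; omega
    rw [Finset.sum_subset hsub (fun j _ hj => by
      have : l < j := by simp only [Finset.mem_range, not_lt] at hj ⊢; omega
      rw [Nat.choose_eq_zero_of_lt this]
      push_cast
      ring)]
    refine Finset.sum_congr rfl fun j hj => ?_
    rcases le_or_gt j l with hjl | hjl
    · rw [neg_one_pow_sub_eq hjl]
      have hsign : (-1:ℝ)^(l+1) * ((-1:ℝ)^l * (-1:ℝ)^j) = (-1:ℝ)^(j+1) := by
        rw [pow_succ, pow_succ]
        have h2 : (-1:ℝ)^l * (-1:ℝ)^l = 1 := by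
          rw [← pow_add, ← two_mul]; exact (even_two_mul l).neg_one_pow
        calc (-1:ℝ)^l * (-1) * ((-1:ℝ)^l * (-1:ℝ)^j)
            = ((-1:ℝ)^l * (-1:ℝ)^l) * ((-1:ℝ)^j * (-1)) := by ring
          _ = (-1:ℝ)^j * (-1) := by rw [h2, one_mul]
      push_cast
      linear_combination (((n - l).choose (n - 1 - k) : ℝ) * ((l.choose j : ℕ) : ℝ) * ((j:ℝ)^n)) * hsign
    · rw [Nat.choose_eq_zero_of_lt hjl]
      push_cast
      ring
  rw [Finset.sum_congr rfl step1]
  have hsub2 : Finset.Icc 1 (k+1) ⊆ Finset.range (n+1) := by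
    intro l hl
    rw [Finset.mem_Icc] at hl
    rw [Finset.mem_range]
    omega
  have h0 : ∀ l ∈ Finset.range (n+1), l ∉ Finset.Icc 1 (k+1) →
      (∑ j ∈ Finset.range (n+2),
          (-1:ℝ)^(j+1) * (j:ℝ)^n * ((l.choose j : ℕ) * ((n-l).choose (n-1-k) : ℕ) : ℝ)) = 0 := by
    intro l hl hl'
    rw [Finset.mem_range] at hl
    rw [Finset.mem_Icc] at hl'
    refine Finset.sum_eq_zero fun j hj => ?_
    rcases Nat.eq_zero_or_pos l with rfl | hlpos
    · rcases Nat.eq_zero_or_pos j with rfl | hjpos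
      · simp [zero_pow (show n ≠ 0 by omega)]
      · rw [Nat.choose_eq_zero_of_lt (by omega : 0 < j)]
        push_cast
        ring
    · have : l ≥ k + 2 := by omega
      rw [Nat.choose_eq_zero_of_lt (by omega : n - l < n - 1 - k)]
      push_cast
      ring
  rw [Finset.sum_subset hsub2 h0, Finset.sum_comm]
  refine Finset.sum_congr rfl fun j hj => ?_
  rw [← Finset.mul_sum]
  congr 1
  have hv : (∑ l ∈ Finset.range (n+1), ((l.choose j : ℝ) * (((n-l).choose (n-1-k) : ℕ) : ℝ)))
      = (((n+1).choose (j+(n-1-k)+1) : ℕ) : ℝ) := by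
    exact_mod_cast congrArg (fun t : ℕ => (t : ℝ)) (vand j n (n-1-k))
  rw [hv]
  congr 2
  omega

lemma core (n k : ℕ) (hn : Odd n) (hk : k ≤ n - 1) :
    ∑ j ∈ Finset.range (n+2), (-1:ℝ)^(j+1) * (j:ℝ)^n * ((n+1).choose (n-k+j) : ℝ)
    = ∑ j ∈ Finset.range (n+2), (-1:ℝ)^(j+1) * (j:ℝ)^n * ((n+1).choose (k+1+j) : ℝ) := by
  have hn1 : 1 ≤ n := hn.pos
  set g : ℕ → ℝ := fun i => (-1:ℝ)^i * ((n+1).choose i : ℝ) * (-((k:ℝ)+1) + i)^n with hg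
  have hT : ∑ i ∈ range (n+2), g i = 0 := alt_sum n hn (-((k:ℝ)+1))
  have hsplit : ∑ i ∈ range (k+2), g i + ∑ i ∈ Finset.Ico (k+2) (n+2), g i
      = ∑ i ∈ range (n+2), g i := by
    simp only [Finset.range_eq_Ico]
    exact Finset.sum_Ico_consecutive _ (Nat.zero_le _) (by omega)
  have hpart1 : ∑ i ∈ range (k+2), g i
      = (-1:ℝ)^(k+1) * ∑ j ∈ range (n+2), (-1:ℝ)^(j+1) * (j:ℝ)^n * ((n+1).choose (n-k+j) : ℝ) := by
    rw [← Finset.sum_range_reflect g (k+2)]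
    have h1 : ∀ j ∈ range (k+2), g (k+2-1-j)
        = (-1:ℝ)^(k+1) * ((-1:ℝ)^(j+1) * (j:ℝ)^n * ((n+1).choose (n-k+j) : ℝ)) := by
      intro j hj
      rw [Finset.mem_range] at hj
      have hj' : j ≤ k + 1 := by omega
      have harg : k + 2 - 1 - j = k + 1 - j := by omega
      rw [harg, hg]
      have hc : ((n+1).choose (k+1-j) : ℝ) = ((n+1).choose (n-k+j) : ℝ) := by
        have h1 : k + 1 - j ≤ n + 1 := by omega
        have h2 : n + 1 - (k+1-j) = n - k + j := by omega
        rw [← Nat.choose_symm h1, h2]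
      have hbase : (-((k:ℝ)+1) + ((k+1-j : ℕ) : ℝ)) = -(j:ℝ) := by
        have : ((k+1-j : ℕ) : ℝ) = (k:ℝ) + 1 - j := by
          push_cast [Nat.cast_sub (by omega : j ≤ k+1)]
          ring
        rw [this]; ring
      simp only []
      rw [hbase, hc, neg_one_pow_sub_eq hj', Odd.neg_pow hn]
      rw [pow_succ, pow_succ]
      ring
    rw [Finset.sum_congr rfl h1, ← Finset.mul_sum]
    congr 1
    refine Finset.sum_subset (Finset.range_subset_range.2 (by omega)) ?_
    intro j hj hj'
    rw [Finset.mem_range] at hj hj'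
    rw [Nat.choose_eq_zero_of_lt (by omega : n + 1 < n - k + j)]
    push_cast
    ring
  have hpart2 : ∑ i ∈ Finset.Ico (k+2) (n+2), g i
      = (-1:ℝ)^k * ∑ j ∈ range (n+2), (-1:ℝ)^(j+1) * (j:ℝ)^n * ((n+1).choose (k+1+j) : ℝ) := by
    rw [Finset.sum_Ico_eq_sum_range]
    have hred : n + 2 - (k + 2) = n - k := by omega
    rw [hred]
    have hS2 : ∑ j ∈ range (n+2), (-1:ℝ)^(j+1) * (j:ℝ)^n * ((n+1).choose (k+1+j) : ℝ)
        = ∑ i ∈ range (n+1), (-1:ℝ)^i * ((i:ℝ)+1)^n * ((n+1).choose (k+2+i) : ℝ) := by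
      rw [Finset.sum_range_succ']
      have h0 : (-1:ℝ)^(0+1) * ((0:ℕ):ℝ)^n * ((n+1).choose (k+1+0) : ℝ) = 0 := by
        rw [Nat.cast_zero, zero_pow (by omega : n ≠ 0)]
        ring
      rw [h0, add_zero]
      refine Finset.sum_congr rfl fun i _ => ?_
      have : k + 1 + (i+1) = k + 2 + i := by omega
      rw [this]
      have hsign : (-1:ℝ)^(i+1+1) = (-1:ℝ)^i := by
        rw [pow_succ, pow_succ]; ring
      rw [hsign]
      push_cast
      ring
    rw [hS2]
    have hext : ∑ i ∈ range (n+1), (-1:ℝ)^i * ((i:ℝ)+1)^n * ((n+1).choose (k+2+i) : ℝ)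
        = ∑ i ∈ range (n-k), (-1:ℝ)^i * ((i:ℝ)+1)^n * ((n+1).choose (k+2+i) : ℝ) := by
      refine (Finset.sum_subset (Finset.range_subset_range.2 (by omega)) ?_).symm
      intro i hi hi'
      rw [Finset.mem_range] at hi hi'
      rw [Nat.choose_eq_zero_of_lt (by omega : n + 1 < k + 2 + i)]
      push_cast
      ring
    rw [hext, Finset.mul_sum]
    refine Finset.sum_congr rfl fun i _ => ?_
    rw [hg]
    simp only []
    have hbase : (-((k:ℝ)+1) + ((k+2+i : ℕ) : ℝ)) = (i:ℝ) + 1 := by push_cast; ring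
    rw [hbase]
    have hsign : (-1:ℝ)^(k+2+i) = (-1:ℝ)^k * (-1:ℝ)^i := by
      rw [pow_add, pow_add]; ring
    rw [hsign]
    ring
  have hthis := hsplit
  rw [hpart1, hpart2, hT] at hthis
  have hk2 : (-1:ℝ)^k ≠ 0 := by positivity
  have hkk : (-1:ℝ)^(k+1) = -(-1:ℝ)^k := by rw [pow_succ]; ring
  rw [hkk] at hthis
  have h3 : (-1:ℝ)^k *
      ((∑ j ∈ range (n+2), (-1:ℝ)^(j+1) * (j:ℝ)^n * ((n+1).choose (k+1+j) : ℝ))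
       - ∑ j ∈ range (n+2), (-1:ℝ)^(j+1) * (j:ℝ)^n * ((n+1).choose (n-k+j) : ℝ)) = 0 := by
    linear_combination hthis
  rcases mul_eq_zero.1 h3 with h | h
  · exact absurd h hk2
  · linarith

lemma bcoef_symm (n k : ℕ) (hn : Odd n) (hk : k ≤ n - 1) :
    bcoef n k = bcoef n (n - 1 - k) := by
  have hn1 : 1 ≤ n := hn.pos
  rw [bcoef_closed n k hn1 hk, bcoef_closed n (n-1-k) hn1 (by omega)]
  rw [core n k hn hk]
  refine Finset.sum_congr rfl fun j _ => ?_
  rw [show n - (n-1-k) = k + 1 from by omega]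

/-! ### Analytic lemmas -/

lemma deriv_symm (Ψ : ℝ → ℝ) (hdiff : Differentiable ℝ Ψ)
    (hsym : ∀ x, 1 - Ψ (-x) = Ψ x) (x : ℝ) : deriv Ψ (-x) = deriv Ψ x := by
  have h1 : HasDerivAt (fun y : ℝ => Ψ (-y)) (deriv Ψ (-x) * (-1)) x :=
    ((hdiff (-x)).hasDerivAt).comp x (hasDerivAt_neg x)
  have h2 : HasDerivAt (fun y : ℝ => 1 - Ψ (-y)) (0 - deriv Ψ (-x) * (-1)) x :=
    (hasDerivAt_const x 1).sub h1
  have h3 : (fun y : ℝ => 1 - Ψ (-y)) = Ψ := funext hsym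
  rw [h3] at h2
  rw [h2.deriv]
  ring

lemma int_reflect (m k : ℕ) (hk : k ≤ 2*m) (Ψ : ℝ → ℝ)
    (hdiff : Differentiable ℝ Ψ) (hsym : ∀ x, 1 - Ψ (-x) = Ψ x) :
    (∫ x : ℝ, x * (-(deriv Ψ x)) * Ψ x ^ k * (1 - Ψ x) ^ (2*m - k))
    = - ∫ x : ℝ, x * (-(deriv Ψ x)) * Ψ x ^ (2*m-k) * (1 - Ψ x) ^ (2*m - (2*m-k)) := by
  have hrefl := integral_neg_eq_self
    (fun x : ℝ => x * (-(deriv Ψ x)) * Ψ x ^ k * (1 - Ψ x) ^ (2*m - k)) volume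
  rw [← hrefl, ← MeasureTheory.integral_neg]
  congr 1
  funext x
  have hΨ : Ψ (-x) = 1 - Ψ x := by rw [← hsym x]; ring
  have h1Ψ : 1 - Ψ (-x) = Ψ x := hsym x
  have hd := deriv_symm Ψ hdiff hsym x
  have hkk : 2*m - (2*m - k) = k := by omega
  simp only [hΨ, h1Ψ, hd, hkk]
  ring

theorem B_odd_vanishes (m : ℕ) (hm : 1 ≤ m) (Ψ : ℝ → ℝ)
    (hdiff : Differentiable ℝ Ψ) (hmono : Antitone Ψ)
    (hrange : ∀ x, Ψ x ∈ Set.Icc (0 : ℝ) 1)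
    (hsym : ∀ x, 1 - Ψ (-x) = Ψ x)
    (hL1 : IntegrableOn Ψ (Set.Ioi 0))
    (hint : ∀ k ≤ 2 * m, Integrable (fun x : ℝ =>
      x * (-(deriv Ψ x)) * Ψ x ^ k * (1 - Ψ x) ^ (2 * m - k))) :
    ∑ k ∈ Finset.range (2 * m + 1),
        bcoef (2 * m + 1) k *
          ∫ x : ℝ, x * (-(deriv Ψ x)) * Ψ x ^ k * (1 - Ψ x) ^ (2 * m - k) = 0 := by
  set f : ℕ → ℝ := fun k => bcoef (2 * m + 1) k *
    ∫ x : ℝ, x * (-(deriv Ψ x)) * Ψ x ^ k * (1 - Ψ x) ^ (2 * m - k) with hf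
  have hodd : Odd (2*m+1) := ⟨m, by omega⟩
  have hrev : ∑ k ∈ Finset.range (2*m+1), f k = ∑ j ∈ Finset.range (2*m+1), f (2*m - j) := by
    rw [← Finset.sum_range_reflect f (2*m+1)]
    refine Finset.sum_congr rfl fun j hj => ?_
    rw [show 2*m+1-1-j = 2*m-j from by omega]
  have hterm : ∀ j ∈ Finset.range (2*m+1), f (2*m - j) = - f j := by
    intro j hj
    rw [Finset.mem_range] at hj
    have hj' : j ≤ 2*m := by omega
    rw [hf]
    simp only []
    have hb : bcoef (2*m+1) (2*m - j) = bcoef (2*m+1) j := by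
      have := bcoef_symm (2*m+1) j hodd (by omega)
      rw [show 2*m+1-1-j = 2*m-j from by omega] at this
      exact this.symm
    have hI := int_reflect m j hj' Ψ hdiff hsym
    rw [hb]
    rw [show 2*m - (2*m - j) = j from by omega] at hI
    rw [show (∫ x : ℝ, x * (-(deriv Ψ x)) * Ψ x ^ (2*m - j) * (1 - Ψ x) ^ (2 * m - (2*m - j)))
        = - ∫ x : ℝ, x * (-(deriv Ψ x)) * Ψ x ^ j * (1 - Ψ x) ^ (2*m - j) from ?_]
    · ring
    · have := hI
      -- hI : ∫ (j-exponents) = - ∫ ((2m-j)-exponents with inner exp j)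
      -- we need the reverse form
      rw [show 2*m - (2*m - j) = j from by omega]
      linarith [int_reflect m (2*m - j) (by omega) Ψ hdiff hsym, hI]
  have : ∑ k ∈ Finset.range (2*m+1), f k = - ∑ k ∈ Finset.range (2*m+1), f k := by
    calc ∑ k ∈ Finset.range (2*m+1), f k
        = ∑ j ∈ Finset.range (2*m+1), f (2*m - j) := hrev
      _ = ∑ j ∈ Finset.range (2*m+1), (- f j) := Finset.sum_congr rfl hterm
      _ = - ∑ k ∈ Finset.range (2*m+1), f k := by rw [Finset.sum_neg_distrib]
  linarith
end
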